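/- Let G be a non-degenerate [n,k,d]_q code with k ≥ 3 and Singleton defect s, whose dual is AMDS (defect t = 1). Then the points of G on any secant hyperplane form a (k+s−1)-arc in PG(k−2,q); consequently k + s − 1 ≤ m(k−1,q), the maximum length of an MDS code of dimension k−1 over F_q. -/

import Mathlib

/-- The number of points (with multiplicity) of the projective system `G`
lying on the hyperplane `ker φ`. -/
noncomputable def hypCount {F : Type*} [Field F] [DecidableEq F] {n k : ℕ}
    (G : Fin n → Fin k → F) (φ : (Fin k → F) →ₗ[F] F) : ℕ :=
  (Finset.univ.filter fun i => φ (G i) = 0).card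

/-- `G` is (the projective system of) a non-degenerate linear `[n,k,d]_q` code:
an `n`-multiset of nonzero points spanning `PG(k-1,q)`, every hyperplane containing
at most `n - d` points, and some hyperplane (a secant) containing exactly `n - d`. -/
def IsCodePS (F : Type*) [Field F] [DecidableEq F] (n k d : ℕ)
    (G : Fin n → Fin k → F) : Prop :=
  0 < d ∧ (∀ i, G i ≠ 0) ∧ Submodule.span F (Set.range G) = ⊤ ∧
  (∀ φ : (Fin k → F) →ₗ[F] F, φ ≠ 0 → hypCount G φ + d ≤ n) ∧
  (∃ φ : (Fin k → F) →ₗ[F] F, φ ≠ 0 ∧ hypCount G φ + d = n)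

/-- `mPar F s k` is `m^s(k,q)`: the maximum length of a non-degenerate
`[n,k,d]_q` code with Singleton defect `s = n - k + 1 - d`. -/
noncomputable def mPar (F : Type*) [Field F] [Fintype F] [DecidableEq F] (s k : ℕ) : ℕ :=
  sSup {n : ℕ | ∃ d : ℕ, ∃ G : Fin n → Fin k → F, IsCodePS F n k d G ∧ d + k + s = n + 1}

/-- The dual code of the code with projective system `G` has minimum distance `w`:
every subfamily of fewer than `w` points is linearly independent, and some
subfamily of `w` points is linearly dependent. -/
def HasDualDist (F : Type*) [Field F] {n k : ℕ} (G : Fin n → Fin k → F) (w : ℕ) : Prop :=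
  (∀ S : Finset (Fin n), S.card < w → LinearIndependent F (fun i : {x // x ∈ S} => G i.1)) ∧
  (∃ S : Finset (Fin n), S.card = w ∧ ¬ LinearIndependent F (fun i : {x // x ∈ S} => G i.1))

open Module Submodule

lemma range_eq_top_of_ne_zero' {F : Type*} [Field F] {V : Type*} [AddCommGroup V] [Module F V]
    (ψ : V →ₗ[F] F) (h : ψ ≠ 0) : LinearMap.range ψ = ⊤ := by
  rcases DFunLike.ne_iff.1 h with ⟨x, hx⟩
  simp only [LinearMap.zero_apply] at hx
  rw [eq_top_iff]
  rintro y -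
  exact ⟨(y * (ψ x)⁻¹) • x, by simp [mul_assoc, inv_mul_cancel₀ hx]⟩

lemma finrank_ker_functional' {F : Type*} [Field F] {r : ℕ} (ψ : (Fin r → F) →ₗ[F] F)
    (h : ψ ≠ 0) : finrank F (LinearMap.ker ψ) + 1 = r := by
  have h1 := LinearMap.finrank_range_add_finrank_ker ψ
  rw [range_eq_top_of_ne_zero' ψ h, finrank_top, Module.finrank_self,
    Module.finrank_fin_fun] at h1
  omega

lemma card_le_finrank_of_mem' {F : Type*} [Field F] {V : Type*} [AddCommGroup V] [Module F V]
    [FiniteDimensional F V] {ι : Type*} [Fintype ι] {v : ι → V} (p : Submodule F V)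
    (hv : ∀ i, v i ∈ p) (hind : LinearIndependent F v) : Fintype.card ι ≤ finrank F p := by
  have h1 : LinearIndependent F (fun i => (⟨v i, hv i⟩ : p)) :=
    (p.subtype.linearIndependent_iff (ker_subtype p)).1 hind
  exact h1.fintype_card_le_finrank

/-- Let `G` be a non-degenerate `[n,k,d]_q` code, `k ≥ 3`, with Singleton defect `s`,
whose dual is AMDS (`t = 1`, i.e. dual distance `k`). Then the points of `G` on any
secant hyperplane `ker φ` form a `(k+s-1)`-arc in `PG(k-2,q)`: every subset of at most
`k - 1` of them is linearly independent. Consequently `k + s - 1 ≤ m(k-1,q)`,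
the maximum length of an MDS code of dimension `k - 1`. -/
theorem secant_is_arc (F : Type*) [Field F] [Fintype F] [DecidableEq F]
    (n k d s : ℕ) (G : Fin n → Fin k → F)
    (hk : 3 ≤ k) (hG : IsCodePS F n k d G) (hs : d + k + s = n + 1)
    (hdual : HasDualDist F G k)
    (φ : (Fin k → F) →ₗ[F] F) (hφ : φ ≠ 0) (hsec : hypCount G φ + d = n) :
    (∀ S : Finset (Fin n), (∀ i ∈ S, φ (G i) = 0) → S.card ≤ k - 1 →
      LinearIndependent F (fun i : {x // x ∈ S} => G i.1)) ∧
    k + s ≤ mPar F 0 (k - 1) + 1 := by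
  obtain ⟨hd, hne, hspan, hmax, _⟩ := hG
  obtain ⟨hind, -⟩ := hdual
  refine ⟨fun S _ hcard => hind S (by omega), ?_⟩
  obtain ⟨m, rfl⟩ : ∃ m, k = m + 3 := ⟨k - 3, by omega⟩
  classical
  set S : Finset (Fin n) := Finset.univ.filter (fun i => φ (G i) = 0) with hSdef
  have hScard : S.card = m + s + 2 := by
    have h0 : hypCount G φ = S.card := rfl
    omega
  have hkerrank : finrank F (LinearMap.ker φ) = m + 2 := by
    have := finrank_ker_functional' φ hφ
    omega
  let b := Module.finBasisOfFinrankEq F (LinearMap.ker φ) hkerrank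
  let e := S.orderIsoOfFin hScard
  have hmemS : ∀ j : Fin (m + s + 2), G ((e j : S) : Fin n) ∈ LinearMap.ker φ := by
    intro j
    have h2 : ((e j : S) : Fin n) ∈ Finset.univ.filter (fun i => φ (G i) = 0) := (e j).2
    rw [Finset.mem_filter] at h2
    exact LinearMap.mem_ker.2 h2.2
  set G' : Fin (m + s + 2) → Fin (m + 2) → F :=
    fun j => b.equivFun ⟨G ((e j : S) : Fin n), hmemS j⟩ with hG'def
  -- key independence fact
  have key : ∀ J : Finset (Fin (m + s + 2)), J.card ≤ m + 2 →
      LinearIndependent F (fun j : {x // x ∈ J} => G' j.1) := by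
    intro J hJ
    set g : Fin (m + s + 2) → Fin n := fun j => ((e j : S) : Fin n) with hgdef
    have hginj : Function.Injective g := by
      intro a b hab
      exact (OrderIso.injective e) (Subtype.ext hab)
    set T : Finset (Fin n) := J.image g with hTdef
    have hTcard : T.card < m + 3 := by
      have hTle : T.card ≤ J.card := Finset.card_image_le
      omega
    have hT := hind T hTcard
    set f : {x // x ∈ J} → {x // x ∈ T} :=
      fun j => ⟨g j.1, Finset.mem_image_of_mem g j.2⟩ with hfdef
    have hfinj : Function.Injective f := by
      intro a b hab
      have h3 := Subtype.ext_iff.mp hab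
      exact Subtype.ext (hginj h3)
    have hcomp : LinearIndependent F (fun j : {x // x ∈ J} => G (g j.1)) := hT.comp f hfinj
    have h1 : LinearIndependent F
        (fun j : {x // x ∈ J} => (⟨G (g j.1), hmemS j.1⟩ : LinearMap.ker φ)) :=
      ((LinearMap.ker φ).subtype.linearIndependent_iff (ker_subtype _)).1 hcomp
    exact h1.map' b.equivFun.toLinearMap (LinearEquiv.ker _)
  -- hyperplane bound for G'
  have hbound : ∀ ψ : (Fin (m + 2) → F) →ₗ[F] F, ψ ≠ 0 →
      (Finset.univ.filter fun j => ψ (G' j) = 0).card ≤ m + 1 := by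
    intro ψ hψ
    by_contra hlt
    push_neg at hlt
    obtain ⟨J, hJsub, hJcard⟩ :=
      Finset.exists_subset_card_eq (s := Finset.univ.filter fun j => ψ (G' j) = 0) (n := m + 2) (by omega)
    have hindJ := key J (le_of_eq hJcard)
    have hmemk : ∀ j : {x // x ∈ J}, G' j.1 ∈ LinearMap.ker ψ := by
      intro j
      have := hJsub j.2
      rw [Finset.mem_filter] at this
      exact LinearMap.mem_ker.2 this.2
    have hle := card_le_finrank_of_mem' (LinearMap.ker ψ) hmemk hindJ
    rw [Fintype.card_coe, hJcard] at hle
    have := finrank_ker_functional' ψ hψ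
    omega
  -- IsCodePS for G'
  have hcode : IsCodePS F (m + s + 2) (m + 2) (s + 1) G' := by
    refine ⟨Nat.succ_pos s, ?_, ?_, ?_, ?_⟩
    · intro j hj
      apply hne ((e j : S) : Fin n)
      have : (⟨G ((e j : S) : Fin n), hmemS j⟩ : LinearMap.ker φ) = 0 := by
        have := (LinearEquiv.map_eq_zero_iff b.equivFun).1 hj
        exact this
      exact congrArg Subtype.val this
    · -- span = ⊤
      obtain ⟨J, -, hJcard⟩ :=
        Finset.exists_subset_card_eq (s := (Finset.univ : Finset (Fin (m + s + 2)))) (n := m + 2)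
          (by rw [Finset.card_univ, Fintype.card_fin]; omega)
      have hindJ := key J (le_of_eq hJcard)
      have h2 : finrank F (span F (Set.range (fun j : {x // x ∈ J} => G' j.1))) = m + 2 := by
        rw [finrank_span_eq_card hindJ, Fintype.card_coe, hJcard]
      have hfle : finrank F (span F (Set.range G')) ≤ m + 2 := by
        have h4 := (span F (Set.range G')).finrank_le
        rwa [Module.finrank_fin_fun] at h4
      have h5 : span F (Set.range fun j : {x // x ∈ J} => G' j.1) ≤ span F (Set.range G') := by
        apply span_mono
        rintro x ⟨j, rfl⟩
        exact ⟨j.1, rfl⟩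
      have h6 := Submodule.finrank_mono h5
      apply Submodule.eq_top_of_finrank_eq
      rw [Module.finrank_fin_fun]
      omega
    · intro ψ hψ
      have := hbound ψ hψ
      have h0 : hypCount G' ψ = (Finset.univ.filter fun j => ψ (G' j) = 0).card := rfl
      omega
    · -- secant for G'
      obtain ⟨T, -, hTcard⟩ :=
        Finset.exists_subset_card_eq (s := (Finset.univ : Finset (Fin (m + s + 2)))) (n := m + 1)
          (by rw [Finset.card_univ, Fintype.card_fin]; omega)
      set U : Submodule F (Fin (m + 2) → F) := span F ((T.image G' : Finset _) : Set _)
        with hUdef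
      have hUlt : U < ⊤ := by
        rw [lt_top_iff_ne_top]
        intro h
        have h2 : finrank F U ≤ m + 1 := by
          refine le_trans (finrank_span_finset_le_card _) ?_
          exact le_trans Finset.card_image_le (le_of_eq hTcard)
        rw [h, finrank_top, Module.finrank_fin_fun] at h2
        omega
      obtain ⟨ψ, hψ, hmap⟩ := Submodule.exists_dual_map_eq_bot_of_lt_top hUlt inferInstance
      refine ⟨ψ, hψ, ?_⟩
      have hTsub : T ⊆ Finset.univ.filter fun j => ψ (G' j) = 0 := by
        intro j hj
        rw [Finset.mem_filter]
        refine ⟨Finset.mem_univ _, ?_⟩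
        have hU : G' j ∈ U := subset_span (by
          simp only [Finset.coe_image, Set.mem_image, Finset.mem_coe]
          exact ⟨j, hj, rfl⟩)
        have : ψ (G' j) ∈ U.map ψ := ⟨G' j, hU, rfl⟩
        rw [hmap] at this
        exact (Submodule.mem_bot F).1 this
      have hge : m + 1 ≤ (Finset.univ.filter fun j => ψ (G' j) = 0).card := by
        rw [← hTcard]; exact Finset.card_le_card hTsub
      have hle := hbound ψ hψ
      have h0 : hypCount G' ψ = (Finset.univ.filter fun j => ψ (G' j) = 0).card := rfl
      omega
  -- membership and sup
  letI : Fintype ((Fin (m + 2) → F) →ₗ[F] F) :=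
    Fintype.ofInjective (fun ψ => (ψ : (Fin (m + 2) → F) → F)) DFunLike.coe_injective
  have hbdd : BddAbove {N : ℕ | ∃ d0 : ℕ, ∃ G0 : Fin N → Fin (m + 2) → F,
      IsCodePS F N (m + 2) d0 G0 ∧ d0 + (m + 2) + 0 = N + 1} := by
    refine ⟨(m + 1) * Fintype.card ((Fin (m + 2) → F) →ₗ[F] F), ?_⟩
    rintro N ⟨d0, G0, ⟨hd0, hne0, -, hmax0, -⟩, heq⟩
    have hchoice : ∀ i : Fin N, ∃ ψ : (Fin (m + 2) → F) →ₗ[F] F, ψ ≠ 0 ∧ ψ (G0 i) = 0 := by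
      intro i
      have hlt : span F {G0 i} < ⊤ := by
        rw [lt_top_iff_ne_top]
        intro h
        have h2 : finrank F (span F ({G0 i} : Set (Fin (m + 2) → F))) = 1 :=
          finrank_span_singleton (hne0 i)
        rw [h, finrank_top, Module.finrank_fin_fun] at h2
        omega
      obtain ⟨ψ, hψ, hmap⟩ := Submodule.exists_dual_map_eq_bot_of_lt_top hlt inferInstance
      refine ⟨ψ, hψ, ?_⟩
      have : ψ (G0 i) ∈ (span F {G0 i}).map ψ :=
        ⟨G0 i, subset_span rfl, rfl⟩
      rw [hmap] at this
      exact (Submodule.mem_bot F).1 this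
    choose f hf1 hf2 using hchoice
    have hfib : ∀ a ∈ Finset.univ.image f,
        (Finset.univ.filter fun i => f i = a).card ≤ m + 1 := by
      intro a ha
      obtain ⟨i, -, rfl⟩ := Finset.mem_image.1 ha
      have hsub : (Finset.univ.filter fun j => f j = f i) ⊆
          (Finset.univ.filter fun j => (f i) (G0 j) = 0) := by
        intro j hj
        rw [Finset.mem_filter] at hj ⊢
        exact ⟨hj.1, hj.2 ▸ hf2 j⟩
      have h1 := Finset.card_le_card hsub
      have h2 := hmax0 (f i) (hf1 i)
      have h0 : hypCount G0 (f i) = (Finset.univ.filter fun j => (f i) (G0 j) = 0).card := rfl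
      omega
    have h3 := Finset.card_le_mul_card_image Finset.univ (m + 1) hfib
    rw [Finset.card_univ, Fintype.card_fin] at h3
    calc N ≤ (m + 1) * (Finset.univ.image f).card := h3
      _ ≤ (m + 1) * Fintype.card ((Fin (m + 2) → F) →ₗ[F] F) := by
          exact Nat.mul_le_mul_left _ (Finset.card_le_univ _)
  have hmemset : (m + s + 2) ∈ {N : ℕ | ∃ d0 : ℕ, ∃ G0 : Fin N → Fin (m + 2) → F,
      IsCodePS F N (m + 2) d0 G0 ∧ d0 + (m + 2) + 0 = N + 1} :=
    ⟨s + 1, G', hcode, by omega⟩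
  have hsup : m + s + 2 ≤ mPar F 0 (m + 2) := by
    unfold mPar
    exact le_csSup hbdd hmemset
  have hk1 : m + 3 - 1 = m + 2 := rfl
  rw [hk1]
  omega
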